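/- Let μ be a symmetric probability distribution on a group G, let V = ℓ∞(G), and suppose J is a positive linear functional on the ideal generated by the μ-orbit of some v ≩ 0, normalized with J(v) = 1 and satisfying J(μ*u) = t·J(u) for all u in that ideal, for some t ≤ 1. Then t ≥ ρ(μ), the spectral radius of μ. -/
import Mathlib


/-- Convolution of two summable kernels on a group `G`:
`(μ * ν)(x) = Σ_s μ(s) ν(s⁻¹x)`.  Applied to `μ` and a bounded function `u`, this is the
action `μ * u = Σ_g μ(g)·(g u)` of a probability distribution on `ℓ∞(G)`. -/
noncomputable def conv {G : Type*} [Group G] (μ ν : G → ℝ) : G → ℝ :=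
  fun x => ∑' s : G, μ s * ν (s⁻¹ * x)

open Classical in
/-- The `n`-fold convolution power `μ*ⁿ` of a distribution `μ` on `G`
(with `μ*⁰ = δ_e`). -/
noncomputable def convPow {G : Type*} [Group G] (μ : G → ℝ) : ℕ → G → ℝ
  | 0 => fun x => if x = 1 then 1 else 0
  | n + 1 => conv μ (convPow μ n)

/-- The spectral radius `ρ(μ) = limsup_n (μ*ⁿ(e))^{1/n}` of a distribution on `G`. -/
noncomputable def specRad {G : Type*} [Group G] (μ : G → ℝ) : ℝ :=
  Filter.atTop.limsup fun n : ℕ => (convPow μ n 1) ^ ((n : ℝ)⁻¹)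

/-- An ideal in an ordered vector space: a subspace closed under order-intervals. -/
def IsIdeal {V : Type*} [AddCommGroup V] [PartialOrder V] [Module ℝ V]
    (W : Submodule ℝ V) : Prop :=
  ∀ ⦃w w' v : V⦄, w ∈ W → w' ∈ W → w ≤ v → v ≤ w' → v ∈ W

/-- The ideal generated by a subset `A`: the intersection of all ideals containing `A`. -/
noncomputable def idealGen {V : Type*} [AddCommGroup V] [PartialOrder V] [Module ℝ V]
    (A : Set V) : Submodule ℝ V :=
  sInf {W : Submodule ℝ V | IsIdeal W ∧ A ⊆ W}

section Aux
variable {G : Type*} [Group G] {μ : G → ℝ}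

lemma convPow_nonneg (hpos : ∀ g : G, 0 ≤ μ g) (n : ℕ) (g : G) : 0 ≤ convPow μ n g := by
  induction n generalizing g with
  | zero => simp only [convPow]; split <;> norm_num
  | succ n ih => exact tsum_nonneg fun s => mul_nonneg (hpos s) (ih _)

lemma convPow_le_one (hpos : ∀ g : G, 0 ≤ μ g) (hsum : HasSum μ 1) (n : ℕ) (g : G) :
    convPow μ n g ≤ 1 := by
  induction n generalizing g with
  | zero => simp only [convPow]; split <;> norm_num
  | succ n ih =>
    have hle : ∀ s : G, μ s * convPow μ n (s⁻¹ * g) ≤ μ s := fun s => by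
      simpa using mul_le_mul_of_nonneg_left (ih (s⁻¹ * g)) (hpos s)
    have hS : Summable fun s : G => μ s * convPow μ n (s⁻¹ * g) :=
      hsum.summable.of_nonneg_of_le
        (fun s => mul_nonneg (hpos s) (convPow_nonneg hpos n _)) hle
    calc convPow μ (n+1) g = ∑' s : G, μ s * convPow μ n (s⁻¹ * g) := rfl
      _ ≤ ∑' s : G, μ s := Summable.tsum_le_tsum hle hS hsum.summable
      _ = 1 := hsum.tsum_eq

lemma conv_mem_Icc (hpos : ∀ g : G, 0 ≤ μ g) (hsum : HasSum μ 1)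
    {w : G → ℝ} {C : ℝ} (hw0 : ∀ x, 0 ≤ w x) (hwC : ∀ x, w x ≤ C) (x : G) :
    0 ≤ conv μ w x ∧ conv μ w x ≤ C := by
  have hS : Summable fun s : G => μ s * w (s⁻¹ * x) :=
    (hsum.summable.mul_right C).of_nonneg_of_le
      (fun s => mul_nonneg (hpos s) (hw0 _))
      (fun s => mul_le_mul_of_nonneg_left (hwC _) (hpos s))
  refine ⟨tsum_nonneg fun s => mul_nonneg (hpos s) (hw0 _), ?_⟩
  calc conv μ w x = ∑' s : G, μ s * w (s⁻¹ * x) := rfl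
    _ ≤ ∑' s : G, μ s * C := Summable.tsum_le_tsum
        (fun s => mul_le_mul_of_nonneg_left (hwC _) (hpos s)) hS (hsum.summable.mul_right C)
    _ = C := by rw [tsum_mul_right, hsum.tsum_eq, one_mul]

lemma iter_mem_Icc (hpos : ∀ g : G, 0 ≤ μ g) (hsum : HasSum μ 1)
    {v : G → ℝ} {C : ℝ} (hv0 : ∀ x, 0 ≤ v x) (hvC : ∀ x, v x ≤ C) (n : ℕ) :
    ∀ x, 0 ≤ (conv μ)^[n] v x ∧ (conv μ)^[n] v x ≤ C := by
  induction n with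
  | zero => exact fun x => ⟨hv0 x, hvC x⟩
  | succ n ih =>
    intro x
    rw [Function.iterate_succ_apply']
    exact conv_mem_Icc hpos hsum (fun y => (ih y).1) (fun y => (ih y).2) x

lemma convPow_translate_le (hpos : ∀ g : G, 0 ≤ μ g) (hsum : HasSum μ 1)
    {v : G → ℝ} {C : ℝ} (hv0 : ∀ x, 0 ≤ v x) (hvC : ∀ x, v x ≤ C)
    (n : ℕ) (g x : G) :
    convPow μ n g * v (g⁻¹ * x) ≤ (conv μ)^[n] v x := by
  induction n generalizing g x with
  | zero =>
    simp only [convPow, Function.iterate_zero, id]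
    split
    · next h => subst h; simp
    · simpa using hv0 x
  | succ n ih =>
    have key : ∀ s : G, μ s * (convPow μ n (s⁻¹ * g) * v (g⁻¹ * x))
        ≤ μ s * (conv μ)^[n] v (s⁻¹ * x) := by
      intro s
      have h2 := ih (s⁻¹ * g) (s⁻¹ * x)
      rw [show (s⁻¹ * g)⁻¹ * (s⁻¹ * x) = g⁻¹ * x by group] at h2
      exact mul_le_mul_of_nonneg_left h2 (hpos s)
    have hbd : ∀ s : G, convPow μ n (s⁻¹ * g) * v (g⁻¹ * x) ≤ C := fun s =>
      calc convPow μ n (s⁻¹ * g) * v (g⁻¹ * x) ≤ 1 * C :=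
            mul_le_mul (convPow_le_one hpos hsum n _) (hvC _) (hv0 _) zero_le_one
        _ = C := one_mul C
    have hSL : Summable fun s : G => μ s * (convPow μ n (s⁻¹ * g) * v (g⁻¹ * x)) :=
      (hsum.summable.mul_right C).of_nonneg_of_le
        (fun s => mul_nonneg (hpos s)
          (mul_nonneg (convPow_nonneg hpos n _) (hv0 _)))
        (fun s => mul_le_mul_of_nonneg_left (hbd s) (hpos s))
    have hSR : Summable fun s : G => μ s * (conv μ)^[n] v (s⁻¹ * x) :=
      (hsum.summable.mul_right C).of_nonneg_of_le
        (fun s => mul_nonneg (hpos s) (iter_mem_Icc hpos hsum hv0 hvC n _).1)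
        (fun s => mul_le_mul_of_nonneg_left (iter_mem_Icc hpos hsum hv0 hvC n _).2 (hpos s))
    calc convPow μ (n+1) g * v (g⁻¹ * x)
        = ∑' s : G, μ s * (convPow μ n (s⁻¹ * g) * v (g⁻¹ * x)) := by
          rw [show convPow μ (n+1) g = ∑' s : G, μ s * convPow μ n (s⁻¹ * g) from rfl,
            ← tsum_mul_right]
          simp [mul_assoc]
      _ ≤ ∑' s : G, μ s * (conv μ)^[n] v (s⁻¹ * x) := Summable.tsum_le_tsum key hSL hSR
      _ = (conv μ)^[n+1] v x := by rw [Function.iterate_succ_apply']; rfl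

end Aux

/-- Let `μ` be a symmetric probability distribution on a group `G` and let `J` be a
positive linear functional, normalized at a nonzero bounded `v ≥ 0`, on the ideal
generated by the `μ`-orbit of `v`, satisfying `J(μ*u) = t·J(u)` for some `t ≤ 1`.
Then `t ≥ ρ(μ)`. -/
theorem eigenvalue_ge_specRad {G : Type*} [Group G] (μ : G → ℝ)
    (hpos : ∀ g : G, 0 ≤ μ g) (hsum : HasSum μ 1)
    (hsymm : ∀ g : G, μ g = μ g⁻¹)
    (v : G → ℝ) (hvbdd : ∃ C : ℝ, ∀ x, |v x| ≤ C) (hv : 0 ≤ v) (hv0 : v ≠ 0)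
    (t : ℝ) (ht : t ≤ 1)
    (J : ↥(idealGen {f : G → ℝ | ∃ n : ℕ, f = (conv μ)^[n] v}) →ₗ[ℝ] ℝ)
    (hJpos : ∀ u : ↥(idealGen {f : G → ℝ | ∃ n : ℕ, f = (conv μ)^[n] v}),
      0 ≤ (u : G → ℝ) → 0 ≤ J u)
    (hvmem : v ∈ idealGen {f : G → ℝ | ∃ n : ℕ, f = (conv μ)^[n] v})
    (hJv : J ⟨v, hvmem⟩ = 1)
    (hJeig : ∀ (u : ↥(idealGen {f : G → ℝ | ∃ n : ℕ, f = (conv μ)^[n] v}))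
      (hu : conv μ (u : G → ℝ) ∈ idealGen {f : G → ℝ | ∃ n : ℕ, f = (conv μ)^[n] v}),
      J ⟨conv μ (u : G → ℝ), hu⟩ = t * J u) :
    specRad μ ≤ t := by
  obtain ⟨C, hC⟩ := hvbdd
  have hv0' : ∀ x, 0 ≤ v x := fun x => hv x
  have hvC : ∀ x, v x ≤ C := fun x => (le_abs_self _).trans (hC x)
  have hmem : ∀ n : ℕ, (conv μ)^[n] v ∈
      idealGen {f : G → ℝ | ∃ n : ℕ, f = (conv μ)^[n] v} := fun n =>
    Submodule.mem_sInf.mpr fun W' hW' => hW'.2 ⟨n, rfl⟩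
  have hJn : ∀ n : ℕ, J ⟨(conv μ)^[n] v, hmem n⟩ = t ^ n := by
    intro n
    induction n with
    | zero => simpa using hJv
    | succ n ih =>
      have hu : conv μ ((conv μ)^[n] v) ∈
          idealGen {f : G → ℝ | ∃ n : ℕ, f = (conv μ)^[n] v} := by
        have := hmem (n+1); rwa [Function.iterate_succ_apply'] at this
      have e1 : J ⟨(conv μ)^[n+1] v, hmem (n+1)⟩
          = J ⟨conv μ ((conv μ)^[n] v), hu⟩ := by
        congr 1
        exact Subtype.ext (Function.iterate_succ_apply' (conv μ) n v)
      have e2 := hJeig ⟨(conv μ)^[n] v, hmem n⟩ hu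
      rw [ih] at e2
      rw [e1]
      exact e2.trans (by ring)
  have hkey : ∀ n : ℕ, convPow μ n 1 ≤ t ^ n := by
    intro n
    set d := (⟨(conv μ)^[n] v, hmem n⟩ - convPow μ n 1 • ⟨v, hvmem⟩ :
      ↥(idealGen {f : G → ℝ | ∃ n : ℕ, f = (conv μ)^[n] v})) with hd
    have hdpos : 0 ≤ (d : G → ℝ) := by
      intro x
      have h := convPow_translate_le hpos hsum hv0' hvC n 1 x
      simp only [inv_one, one_mul] at h
      simpa [hd, sub_nonneg] using h
    have h3 := hJpos d hdpos
    rw [hd, map_sub, map_smul, hJn n, hJv, smul_eq_mul, mul_one, sub_nonneg] at h3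
    exact h3
  have ht0 : 0 ≤ t := le_trans (convPow_nonneg hpos 1 1) (by simpa using hkey 1)
  refine Filter.limsup_le_of_le ?_ ?_
  · exact Filter.isCoboundedUnder_le_of_le Filter.atTop (x := 0) fun n =>
      Real.rpow_nonneg (convPow_nonneg hpos n 1) _
  · filter_upwards [Filter.eventually_ge_atTop 1] with n hn
    have hne : (n : ℝ) ≠ 0 := Nat.cast_ne_zero.mpr (by omega)
    calc (convPow μ n 1) ^ ((n : ℝ)⁻¹)
        ≤ (t ^ n) ^ ((n : ℝ)⁻¹) :=
          Real.rpow_le_rpow (convPow_nonneg hpos n 1) (hkey n) (inv_nonneg.mpr (Nat.cast_nonneg _))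
      _ = t := by
          rw [← Real.rpow_natCast t n, ← Real.rpow_mul ht0, mul_inv_cancel₀ hne,
            Real.rpow_one]
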